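/- arXiv:0808.4119 — 2 statements merged into one kernel-verified Lean document; each statement's English description precedes it below -/
import Mathlib

section
/- Suppose f : X → Y is a map between uniform spaces that generates the uniform structure on Y, has chain lifting, and has strong approximate uniqueness of chain lifts, and suppose X is Hausdorff. Let B be a basis of entourages of X such that for each F ∈ B any two F-chains in X starting at the same point with identical images under f are F-close (such a basis exists by strong approximate uniqueness). For F ⊆ E in B, the map φ_{FE} : X_f/F → X_f/E sending q_F(x) to q_E(x) is well defined, giving an inverse system {X_f/E, φ_{FE}} indexed by B (ordered by reverse inclusion), where each X_f/E carries the uniform structure generated by q_E. Then the induced map q : X → lim_{E∈B} X_f/E, x ↦ (q_E(x))_{E∈B}, is a uniform embedding; if moreover f has complete fibers, then q is a uniform equivalence. -/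
open Filter Set

universe u v

section Chains

variable {X : Type u} {Y : Type v}

/-- `c` is an `E`-chain: consecutive members of the list lie in `E`. -/
def IsEChain (E : Set (X × X)) (c : List X) : Prop :=
  c.Chain' (fun a b => (a, b) ∈ E)

/-- Two chains (necessarily of the same length) are `E`-close. -/
def EClose (E : Set (X × X)) (c d : List X) : Prop :=
  List.Forall₂ (fun a b => (a, b) ∈ E) c d

variable [UniformSpace X] [UniformSpace Y]

/-- `f` generates the uniform structure on `Y`: it is uniformly continuous,
surjective, and images of entourages are entourages. -/
def GeneratesUS (f : X → Y) : Prop :=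
  UniformContinuous f ∧ Function.Surjective f ∧
    ∀ E ∈ uniformity X, Prod.map f f '' E ∈ uniformity Y

/-- `f` has chain lifting. -/
def ChainLifting (f : X → Y) : Prop :=
  ∀ E ∈ uniformity X, ∃ F ∈ uniformity X, ∀ x : X, ∀ c : List Y,
    IsEChain (Prod.map f f '' F) c → c.head? = some (f x) →
      ∃ d : List X, IsEChain E d ∧ d.head? = some x ∧ d.map f = c

/-- `f` has uniqueness of chain lifts. -/
def UniqueChainLifts (f : X → Y) : Prop :=
  ∀ E ∈ uniformity X, ∃ F ∈ uniformity X, F ⊆ E ∧ ∀ c d : List X,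
    IsEChain F c → IsEChain F d → c.head? = d.head? → c.map f = d.map f → c = d

/-- `f` has approximate uniqueness of chain lifts. -/
def ApproxUniqueChainLifts (f : X → Y) : Prop :=
  ∀ E ∈ uniformity X, ∃ F ∈ uniformity X, F ⊆ E ∧ ∀ c d : List X,
    IsEChain F c → IsEChain F d → c.head? = d.head? → c.map f = d.map f → EClose E c d

/-- `f` has strong approximate uniqueness of chain lifts. -/
def StrongApproxUniqueChainLifts (f : X → Y) : Prop :=
  ∀ E ∈ uniformity X, ∃ F ∈ uniformity X, F ⊆ E ∧ ∀ c d : List X,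
    IsEChain F c → IsEChain F d → c.head? = d.head? → c.map f = d.map f → EClose F c d

/-- `f` is a uniform covering map. -/
def IsUCM (f : X → Y) : Prop :=
  GeneratesUS f ∧ ChainLifting f ∧ UniqueChainLifts f

/-- `h` has `F`-bounded fibers. -/
def BoundedFibers {Z : Type*} (F : Set (X × X)) (h : X → Z) : Prop :=
  ∀ a b : X, h a = h b → (a, b) ∈ F

/-- `f` has complete fibers (each fiber, with the subspace uniformity, is complete). -/
def CompleteFibers (f : X → Y) : Prop :=
  ∀ y : Y, IsComplete (f ⁻¹' {y})

/-- `f` is approximated by uniform covering maps. -/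
def ApproxByUCMs (f : X → Y) : Prop :=
  ∀ E ∈ uniformity X, ∃ F ∈ uniformity X, F ⊆ E ∧
    ∃ (Z : Type (max u v)) (_ : UniformSpace Z) (h : X → Z) (g : Z → Y),
      (∀ x, g (h x) = f x) ∧ IsUCM g ∧ BoundedFibers F h

end Chains

section XfEQuot

variable {X : Type u} {Y : Type v}

/-- `y` can be joined to `x` by an `E`-chain inside the fiber `f⁻¹(f x)`. -/
def fiberRel (f : X → Y) (E : Set (X × X)) (x y : X) : Prop :=
  ∃ c : List X, IsEChain E c ∧ c.head? = some x ∧ c.getLast? = some y ∧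
    ∀ z ∈ c, f z = f x

theorem fiberRel_mono (f : X → Y) {F E : Set (X × X)} (h : F ⊆ E) {a b : X}
    (hab : fiberRel f F a b) : fiberRel f E a b := by
  obtain ⟨c, hc, h1, h2, h3⟩ := hab
  exact ⟨c, hc.imp (fun _ _ hx => h hx), h1, h2, h3⟩

/-- `X_f/E`: the quotient of `X` obtained by identifying each `E`-component of
each fiber of `f` to a point. -/
def XfE (f : X → Y) (E : Set (X × X)) : Type u :=
  Quot (fiberRel f E)

/-- The quotient map `q_E : X → X_f/E`. -/
def qE (f : X → Y) (E : Set (X × X)) : X → XfE f E :=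
  Quot.mk (fiberRel f E)

/-- The induced map `φ_{FE} : X_f/F → X_f/E` for `F ⊆ E`, sending `q_F x` to `q_E x`. -/
def phiFE (f : X → Y) {F E : Set (X × X)} (h : F ⊆ E) : XfE f F → XfE f E :=
  Quot.lift (qE f E) (fun _ _ hab => Quot.sound (fiberRel_mono f h hab))

end XfEQuot

/-- The inverse limit of the quotients `X_f/E`, over a family `B` of entourages
of `X` ordered by reverse inclusion, with the induced bonding maps `φ_{FE}`. -/
abbrev XfELim {X : Type u} {Y : Type v} (f : X → Y) (B : Set (Set (X × X)))
    [∀ E : Set (X × X), UniformSpace (XfE f E)] : Type _ :=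
  { t : ∀ i : B, XfE f i.1 //
    ∀ (i j : B) (hij : i.1 ⊆ j.1), phiFE f hij (t i) = t j }

/-- The natural map `q : X → lim_{E ∈ B} X_f/E`, `x ↦ (q_E x)_E`. -/
def qLim {X : Type u} {Y : Type v} (f : X → Y) (B : Set (Set (X × X)))
    [∀ E : Set (X × X), UniformSpace (XfE f E)] : X → XfELim f B :=
  fun x => ⟨fun i => qE f i.1 x, fun _ _ _ => rfl⟩

section Aux
set_option linter.unusedSectionVars false

open Filter Set

variable {X : Type u} {Y : Type v}

lemma forall₂_replicate_right {R : X → X → Prop} :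
    ∀ {c : List X} {a : X}, List.Forall₂ R c (List.replicate c.length a) → ∀ z ∈ c, R z a := by
  intro c
  induction c with
  | nil => intro a h z hz; simp at hz
  | cons b l ih =>
    intro a h z hz
    rw [List.length_cons, List.replicate_succ, List.forall₂_cons] at h
    rcases List.mem_cons.1 hz with rfl | hz
    · exact h.1
    · exact ih h.2 z hz

lemma forall₂_replicate_left {R : X → X → Prop} :
    ∀ {c : List X} {a : X}, List.Forall₂ R (List.replicate c.length a) c → ∀ z ∈ c, R a z := by
  intro c
  induction c with
  | nil => intro a h z hz; simp at hz
  | cons b l ih =>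
    intro a h z hz
    rw [List.length_cons, List.replicate_succ, List.forall₂_cons] at h
    rcases List.mem_cons.1 hz with rfl | hz
    · exact h.1
    · exact ih h.2 z hz

variable [UniformSpace X] [UniformSpace Y]

/-- Key lemma: if any two `F`-chains with the same head and same `f`-image are `F`-close,
then an `F`-chain inside a fiber has all its members `F`-close (in both orders) to its head. -/
lemma fiberRel_key (f : X → Y) {F : Set (X × X)} (hF : F ∈ uniformity X)
    (hch : ∀ c d : List X, IsEChain F c → IsEChain F d →
      c.head? = d.head? → c.map f = d.map f → EClose F c d)
    {a b : X} (h : fiberRel f F a b) : (a, b) ∈ F ∧ (b, a) ∈ F ∧ f a = f b := by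
  obtain ⟨c, hc, hhead, hlast, hfib⟩ := h
  have hcne : c ≠ [] := by rintro rfl; simp at hhead
  set d : List X := List.replicate c.length a with hd
  have hdchain : IsEChain F d := List.isChain_replicate_of_rel _ (refl_mem_uniformity hF)
  have hdhead : d.head? = some a := by
    obtain ⟨w, l, rfl⟩ := List.exists_cons_of_ne_nil hcne
    simp [hd, List.replicate_succ]
  have hmapc : c.map f = List.replicate c.length (f a) := by
    have : ∀ w ∈ c.map f, w = f a := by
      intro w hw
      obtain ⟨z, hz, rfl⟩ := List.mem_map.1 hw
      exact hfib z hz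
    simpa using List.eq_replicate_of_mem this
  have hmapd : d.map f = List.replicate c.length (f a) := by simp [hd]
  have hhead' : c.head? = d.head? := by rw [hhead, hdhead]
  have h1 : EClose F c d := hch c d hc hdchain hhead' (hmapc.trans hmapd.symm)
  have h2 : EClose F d c := hch d c hdchain hc hhead'.symm (hmapd.trans hmapc.symm)
  have hbmem : b ∈ c := by
    obtain ⟨hne, rfl⟩ := List.mem_getLast?_eq_getLast hlast
    exact List.getLast_mem hne
  refine ⟨forall₂_replicate_left h2 b hbmem, forall₂_replicate_right h1 b hbmem,
    (hfib b hbmem).symm⟩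

lemma fiberRel_equiv (f : X → Y) {F : Set (X × X)} (hF : F ∈ uniformity X)
    (hch : ∀ c d : List X, IsEChain F c → IsEChain F d →
      c.head? = d.head? → c.map f = d.map f → EClose F c d)
    {a b : X} (h : Relation.EqvGen (fiberRel f F) a b) : fiberRel f F a b := by
  induction h with
  | rel x y hxy => exact hxy
  | refl x => exact ⟨[x], List.isChain_singleton x, rfl, rfl, by simp⟩
  | symm x y _ ih =>
    obtain ⟨h1, h2, h3⟩ := fiberRel_key f hF hch ih
    exact ⟨[y, x], List.IsChain.cons_cons h2 (List.IsChain.singleton _), rfl, rfl, by simp [h3]⟩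
  | trans x y z _ _ ih1 ih2 =>
    obtain ⟨h1, h2, h3⟩ := fiberRel_key f hF hch ih1
    obtain ⟨g1, g2, g3⟩ := fiberRel_key f hF hch ih2
    exact ⟨[x, y, z], List.IsChain.cons_cons h1 (List.IsChain.cons_cons g1 (List.IsChain.singleton _)), rfl, rfl,
      by simp [h3.symm, g3 ▸ h3.symm]⟩

lemma qE_eq_iff (f : X → Y) {F : Set (X × X)} (hF : F ∈ uniformity X)
    (hch : ∀ c d : List X, IsEChain F c → IsEChain F d →
      c.head? = d.head? → c.map f = d.map f → EClose F c d)
    {a b : X} : qE f F a = qE f F b ↔ fiberRel f F a b :=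
  ⟨fun h => fiberRel_equiv f hF hch (Quot.eqvGen_exact h), fun h => Quot.sound h⟩

end Aux

/-- Suppose `f : X → Y` generates the uniform structure on `Y`, has chain
lifting and strong approximate uniqueness of chain lifts, `X` is Hausdorff, and
`B` is a basis of entourages of `X` such that for each `F ∈ B` any two
`F`-chains starting at the same point with identical images under `f` are
`F`-close; suppose each `X_f/E` (for `E ∈ B`) carries the uniform structure
generated by `q_E`. Then `q : X → lim_{E ∈ B} X_f/E` is a uniform embedding,
and if moreover `f` has complete fibers, `q` is a uniform equivalence. -/
theorem qLim_isUniformEmbedding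
    {X : Type u} {Y : Type v} [UniformSpace X] [UniformSpace Y] [T2Space X]
    (f : X → Y) (hgen : GeneratesUS f) (hcl : ChainLifting f)
    (hsau : StrongApproxUniqueChainLifts f)
    (B : Set (Set (X × X)))
    (hBent : ∀ E ∈ B, E ∈ uniformity X)
    (hBbasis : ∀ S ∈ uniformity X, ∃ E ∈ B, E ⊆ S)
    (hBchain : ∀ F ∈ B, ∀ c d : List X, IsEChain F c → IsEChain F d →
      c.head? = d.head? → c.map f = d.map f → EClose F c d)
    [∀ E : Set (X × X), UniformSpace (XfE f E)]
    (huq : ∀ E ∈ B, (uniformity (XfE f E)).HasBasis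
      (fun D : Set (X × X) => D ∈ uniformity X)
      (fun D => Prod.map (qE f E) (qE f E) '' D)) :
    IsUniformEmbedding (qLim f B) ∧
      (CompleteFibers f → ∃ e : X ≃ᵤ XfELim f B, ⇑e = qLim f B) := by
  classical
  have hch : ∀ i : B, ∀ c d : List X, IsEChain i.1 c → IsEChain i.1 d →
      c.head? = d.head? → c.map f = d.map f → EClose i.1 c d := fun i => hBchain i.1 i.2
  have hkey : ∀ (i : B) {a b : X}, fiberRel f i.1 a b →
      (a, b) ∈ i.1 ∧ (b, a) ∈ i.1 ∧ f a = f b :=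
    fun i => fiberRel_key f (hBent i.1 i.2) (hch i)
  have hqe : ∀ (i : B) {a b : X}, qE f i.1 a = qE f i.1 b ↔ fiberRel f i.1 a b :=
    fun i => qE_eq_iff f (hBent i.1 i.2) (hch i)
  have hucq : ∀ i : B, UniformContinuous (qE f i.1) := by
    intro i
    rw [UniformContinuous, (huq i.1 i.2).tendsto_right_iff]
    intro D hD
    filter_upwards [hD] with p hp
    exact ⟨p, hp, rfl⟩
  have hucqLim : UniformContinuous (qLim f B) :=
    (uniformContinuous_pi.2 fun i => hucq i).subtype_mk _
  have hinj : Function.Injective (qLim f B) := by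
    intro x y h
    refine eq_of_uniformity fun {V} hV => ?_
    obtain ⟨F, hFB, hFV⟩ := hBbasis V hV
    have hxy : qE f F x = qE f F y := congrFun (congrArg Subtype.val h) ⟨F, hFB⟩
    exact hFV (hkey ⟨F, hFB⟩ ((hqe ⟨F, hFB⟩).1 hxy)).1
  have hcomap : Filter.comap (fun p : X × X => (qLim f B p.1, qLim f B p.2))
      (uniformity (XfELim f B)) = uniformity X := by
    refine le_antisymm ?_ hucqLim.le_comap
    intro S hS
    rw [Filter.mem_comap]
    obtain ⟨V1, hV1, hV1S⟩ := comp_mem_uniformity_sets hS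
    obtain ⟨V, hV, hVV1⟩ := comp_mem_uniformity_sets hV1
    obtain ⟨F, hFB, hFV⟩ := hBbasis V hV
    set i : B := ⟨F, hFB⟩
    have hproj : UniformContinuous (fun t : XfELim f B => t.1 i) :=
      (Pi.uniformContinuous_proj _ i).comp uniformContinuous_subtype_val
    have hmem : Prod.map (qE f F) (qE f F) '' F ∈ uniformity (XfE f F) :=
      (huq F hFB).mem_of_mem (hBent F hFB)
    refine ⟨(fun p : XfELim f B × XfELim f B => (p.1.1 i, p.2.1 i)) ⁻¹'
        (Prod.map (qE f F) (qE f F) '' F), hproj hmem, ?_⟩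
    rintro ⟨x, y⟩ hxy
    simp only [mem_preimage] at hxy
    obtain ⟨⟨a, b⟩, habF, heq⟩ := hxy
    have ha : qE f F a = qE f F x := congrArg Prod.fst heq
    have hb : qE f F b = qE f F y := congrArg Prod.snd heq
    have h1 : (x, a) ∈ F := (hkey i ((hqe i).1 ha)).2.1
    have h2 : (b, y) ∈ F := (hkey i ((hqe i).1 hb)).1
    exact hV1S ⟨b, hVV1 ⟨a, hFV h1, hFV habF⟩, hVV1 ⟨y, hFV h2, refl_mem_uniformity hV⟩⟩
  refine ⟨⟨⟨hcomap⟩, hinj⟩, ?_⟩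
  intro hcf
  have hsurj : Function.Surjective (qLim f B) := by
    intro t
    have hrep : ∀ i : B, ∃ x : X, qE f i.1 x = t.1 i := fun i => Quot.exists_rep (t.1 i)
    choose x hx using hrep
    have hcompat : ∀ i j : B, i.1 ⊆ j.1 → fiberRel f j.1 (x i) (x j) := by
      intro i j hij
      apply (hqe j).1
      have h := t.2 i j hij
      rw [← hx i, ← hx j] at h
      exact h
    have hBne : Nonempty B := by
      obtain ⟨E0, hE0, -⟩ := hBbasis univ Filter.univ_mem
      exact ⟨⟨E0, hE0⟩⟩
    obtain ⟨i0⟩ := hBne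
    haveI : Nonempty B := ⟨i0⟩
    have hXne : Nonempty X := ⟨x i0⟩
    set y : Y := f (x i0) with hy
    have hfiber : ∀ i : B, f (x i) = y := by
      intro i
      obtain ⟨K, hKB, hK⟩ := hBbasis (i.1 ∩ i0.1)
        (Filter.inter_mem (hBent i.1 i.2) (hBent i0.1 i0.2))
      have h1 := (hkey i (hcompat ⟨K, hKB⟩ i fun p hp => (hK hp).1)).2.2
      have h2 := (hkey i0 (hcompat ⟨K, hKB⟩ i0 fun p hp => (hK hp).2)).2.2
      rw [← h1, h2]
    set T : B → Set X := fun i => x '' {j : B | j.1 ⊆ i.1} with hT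
    have hTmem : ∀ i : B, x i ∈ T i := fun i => ⟨i, fun _ h => h, rfl⟩
    have hdir : Directed (· ≥ ·) (fun i : B => Filter.principal (T i)) := by
      intro i i'
      obtain ⟨K, hKB, hK⟩ := hBbasis (i.1 ∩ i'.1)
        (Filter.inter_mem (hBent i.1 i.2) (hBent i'.1 i'.2))
      refine ⟨⟨K, hKB⟩, Filter.principal_mono.2 ?_, Filter.principal_mono.2 ?_⟩
      · rintro - ⟨j, hj, rfl⟩
        exact ⟨j, fun p hp => (hK (hj hp)).1, rfl⟩
      · rintro - ⟨j, hj, rfl⟩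
        exact ⟨j, fun p hp => (hK (hj hp)).2, rfl⟩
    set L : Filter X := ⨅ i : B, Filter.principal (T i) with hL
    have hLmem : ∀ i : B, T i ∈ L :=
      fun i => Filter.mem_iInf_of_mem i (Filter.mem_principal_self _)
    have hLne : L.NeBot :=
      Filter.iInf_neBot_of_directed hdir fun i => Filter.principal_neBot_iff.2 ⟨x i, hTmem i⟩
    have hLc : Cauchy L := by
      refine ⟨hLne, fun S hS => ?_⟩
      obtain ⟨V, hV, hVS⟩ := comp_mem_uniformity_sets hS
      obtain ⟨G, hGB, hGV⟩ := hBbasis V hV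
      set g : B := ⟨G, hGB⟩
      have hsub : T g ×ˢ T g ⊆ S := by
        rintro ⟨-, -⟩ ⟨⟨j, hj, rfl⟩, ⟨j', hj', rfl⟩⟩
        have h1 : (x j, x g) ∈ G := (hkey g (hcompat j g hj)).1
        have h2 : (x g, x j') ∈ G := (hkey g (hcompat j' g hj')).2.1
        exact hVS ⟨x g, hGV h1, hGV h2⟩
      exact Filter.mem_of_superset (Filter.prod_mem_prod (hLmem g) (hLmem g)) hsub
    have hLfib : L ≤ Filter.principal (f ⁻¹' {y}) := by
      refine Filter.le_principal_iff.2 (Filter.mem_of_superset (hLmem i0) ?_)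
      rintro - ⟨j, hj, rfl⟩
      exact hfiber j
    obtain ⟨z, hzfib, hzL⟩ := hcf y L hLc hLfib
    have hfz : f z = y := hzfib
    refine ⟨z, Subtype.ext (funext fun i => ?_)⟩
    have hrel : fiberRel f i.1 (x i) z := by
      set W := SetRel.symmetrize i.1 with hWdef
      have hW : W ∈ uniformity X := symmetrize_mem_uniformity (hBent i.1 i.2)
      have hnb : {w | (z, w) ∈ W} ∈ nhds z := mem_nhds_left z hW
      have hmemL : {w | (z, w) ∈ W} ∈ L := hzL hnb
      rw [hL, Filter.mem_iInf_of_directed hdir] at hmemL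
      obtain ⟨i', hi'⟩ := hmemL
      obtain ⟨K, hKB, hK⟩ := hBbasis (i.1 ∩ i'.1)
        (Filter.inter_mem (hBent i.1 i.2) (hBent i'.1 i'.2))
      set k : B := ⟨K, hKB⟩
      have hk_i : k.1 ⊆ i.1 := fun p hp => (hK hp).1
      have hzxk : (z, x k) ∈ W :=
        Filter.mem_principal.1 hi' ⟨k, fun p hp => (hK hp).2, rfl⟩
      have h1 : (x i, x k) ∈ i.1 := (hkey i (hcompat k i hk_i)).2.1
      have h2 : (x k, z) ∈ i.1 :=
        hzxk.2
      refine ⟨[x i, x k, z], ?_, rfl, rfl, ?_⟩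
      · exact List.IsChain.cons_cons h1 (List.IsChain.cons_cons h2 (List.IsChain.singleton _))
      · intro w hw
        rcases List.mem_cons.1 hw with rfl | hw
        · rfl
        rcases List.mem_cons.1 hw with rfl | hw
        · rw [hfiber k, hfiber i]
        rcases List.mem_cons.1 hw with rfl | hw
        · rw [hfz, hfiber i]
        · simp at hw
    show qE f i.1 z = t.1 i
    rw [← hx i]
    exact ((hqe i).2 hrel).symm
  exact ⟨Equiv.toUniformEquivOfIsUniformInducing (Equiv.ofBijective _ ⟨hinj, hsurj⟩)
    ⟨hcomap⟩, rfl⟩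
end

section
/- Let f : X → Y be a map between uniform spaces with Y Hausdorff. The following are equivalent: (1) there exist a strong Mittag-Leffler inverse system of uniform spaces {X_α, φ_{βα}} and compatible uniform covering maps f_α : X_α → Y (i.e., f_α ∘ φ_{βα} = f_β for β ≥ α) together with a uniform equivalence u : X → lim X_α satisfying (lim f_α) ∘ u = f; (2) X is Hausdorff and f generates the uniform structure on Y, has chain lifting, has strong approximate uniqueness of chain lifts, and has complete fibers. -/
open Filter Set

universe u v

section ListHelpers

variable {X : Type*} {Y : Type*}

lemma IsEChain.mono {E E' : Set (X × X)} {c : List X} (h : IsEChain E c) (hEE' : E ⊆ E') :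
    IsEChain E' c :=
  List.IsChain.imp (fun _ _ hab => hEE' hab) h

lemma isEChain_map (g : X → Y) {E : Set (Y × Y)} {c : List X} :
    IsEChain E (c.map g) ↔ IsEChain {p : X × X | (g p.1, g p.2) ∈ E} c :=
  List.isChain_map g

lemma map_eq_forall₂ {g : X → Y} : ∀ {c d : List X}, c.map g = d.map g →
    List.Forall₂ (fun a b => g a = g b) c d
  | [], [], _ => List.Forall₂.nil
  | [], _ :: _, h => by simp at h
  | _ :: _, [], h => by simp at h
  | a :: c, b :: d, h => by
      simp only [List.map_cons, List.cons.injEq] at h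
      exact List.Forall₂.cons h.1 (map_eq_forall₂ h.2)

lemma forall₂_map_eq {g : X → Y} {c d : List X}
    (h : List.Forall₂ (fun a b => g a = g b) c d) : c.map g = d.map g := by
  induction h with
  | nil => rfl
  | cons h _ ih => simp [h, ih]

lemma exists_pair_of_map_eq {g : X → Y} {d : List X} {p q : Y}
    (h : d.map g = [p, q]) : ∃ a b, d = [a, b] ∧ g a = p ∧ g b = q := by
  match d with
  | [] => simp at h
  | [a] => simp at h
  | a :: b :: c :: t => simp at h
  | [a, b] => exact ⟨a, b, rfl, by simpa using h⟩

lemma lift_list_range (g : X → Y) : ∀ (c : List Y) (x : X),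
    (∀ b ∈ c, ∃ a, g a = b) → c.head? = some (g x) →
    ∃ d : List X, d.map g = c ∧ d.head? = some x
  | [], x, _, hh => by simp at hh
  | [b], x, _, hh => by
      refine ⟨[x], ?_, rfl⟩
      simp only [List.head?_cons, Option.some.injEq] at hh
      simp [hh]
  | b₁ :: b₂ :: r, x, hr, hh => by
      simp only [List.head?_cons, Option.some.injEq] at hh
      obtain ⟨a₂, ha₂⟩ := hr b₂ (by simp)
      obtain ⟨d, hd, hdh⟩ := lift_list_range g (b₂ :: r) a₂
        (fun b hb => hr b (by simp [hb])) (by simp [ha₂])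
      exact ⟨x :: d, by simp [hd, hh], rfl⟩

lemma isEChain_cons' {E : Set (X × X)} {a : X} {l : List X} :
    IsEChain E (a :: l) ↔ (∀ b ∈ l.head?, (a, b) ∈ E) ∧ IsEChain E l :=
  List.isChain_cons

end ListHelpers

/-- An inverse system of uniform spaces over a preordered index set, with
uniformly continuous bonding maps `bond i j h : Xs j → Xs i` for `i ≤ j`. -/
structure InvSys (ι : Type*) [Preorder ι] (Xs : ι → Type*)
    [∀ i, UniformSpace (Xs i)] where
  bond : ∀ i j, i ≤ j → Xs j → Xs i
  uc : ∀ i j (h : i ≤ j), UniformContinuous (bond i j h)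
  bond_self : ∀ i (x : Xs i), bond i i le_rfl x = x
  bond_comp : ∀ i j k (hij : i ≤ j) (hjk : j ≤ k) (x : Xs k),
    bond i j hij (bond j k hjk x) = bond i k (hij.trans hjk) x

/-- The inverse limit (the set of threads), carrying the inverse limit uniformity:
the subspace uniformity of the product uniformity, whose basic entourages are
preimages of entourages under the projections (since the index set is directed). -/
abbrev InvLim {ι : Type*} [Preorder ι] {Xs : ι → Type*} [∀ i, UniformSpace (Xs i)]
    (S : InvSys ι Xs) : Type _ :=
  { x : ∀ i, Xs i // ∀ i j (h : i ≤ j), S.bond i j h (x j) = x i }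

/-- The strong Mittag-Leffler property of an inverse system. -/
def StrongML {ι : Type*} [Preorder ι] {Xs : ι → Type*} [∀ i, UniformSpace (Xs i)]
    (S : InvSys ι Xs) : Prop :=
  ∀ i : ι, ∃ j : ι, ∃ h : i ≤ j,
    Set.range (S.bond i j h) = Set.range (fun x : InvLim S => x.1 i)

/-- The data witnessing that `f : X → Y` is (up to uniform equivalence) the
inverse limit of a strong Mittag-Leffler inverse system of uniform covering
maps over `Y`. -/
structure UCMInvLimData (X : Type u) (Y : Type v) [UniformSpace X]
    [UniformSpace Y] (f : X → Y) : Type (max u v + 1) where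
  ι : Type (max u v)
  [pre : Preorder ι]
  [dir : IsDirected ι (· ≤ ·)]
  [nonempty : Nonempty ι]
  Xs : ι → Type (max u v)
  [uX : ∀ i, UniformSpace (Xs i)]
  S : InvSys ι Xs
  sml : StrongML S
  fι : ∀ i, Xs i → Y
  compat : ∀ i j (h : i ≤ j) (x : Xs j), fι i (S.bond i j h x) = fι j x
  ucm : ∀ i, IsUCM (fι i)
  equiv : X ≃ᵤ InvLim S
  comm : ∀ (i : ι) (x : X), fι i ((equiv x).1 i) = f x

set_option linter.unusedSectionVars false

section UCMLemmas

variable {Z : Type*} {Y : Type*} [UniformSpace Z] [UniformSpace Y]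

lemma eq_of_pair_aux {g : Z → Y} {F : Set (Z × Z)} (hF : F ∈ uniformity Z)
    (huniq : ∀ c d : List Z, IsEChain F c → IsEChain F d → c.head? = d.head? →
      c.map g = d.map g → c = d)
    {a b : Z} (hab : (a, b) ∈ F) (hg : g a = g b) : a = b := by
  have h1 : IsEChain F [a, a] := List.isChain_pair.2 (refl_mem_uniformity hF)
  have h2 : IsEChain F [a, b] := List.isChain_pair.2 hab
  have := huniq [a, a] [a, b] h1 h2 rfl (by simp [hg])
  simpa using this

lemma ucm_t0 [T2Space Y] {g : Z → Y} (hgc : UniformContinuous g)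
    (hu : UniqueChainLifts g) : T0Space Z := by
  rw [t0Space_iff_uniformity]
  intro a b hab
  obtain ⟨F, hF, _, huniq⟩ := hu univ univ_mem
  have hgab : g a = g b :=
    t0Space_iff_uniformity.1 (inferInstance : T0Space Y) (g a) (g b)
      (fun r hr => hab _ (hgc hr))
  exact eq_of_pair_aux hF huniq (hab F hF) hgab

lemma ucm_completeFibers {g : Z → Y} (hu : UniqueChainLifts g) : CompleteFibers g := by
  intro y l hl hle
  obtain ⟨F, hF, _, huniq⟩ := hu univ univ_mem
  obtain ⟨hne, hc⟩ := cauchy_iff.1 hl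
  obtain ⟨T, hT, hTF⟩ := hc F hF
  have hfib : g ⁻¹' {y} ∈ l := hle (mem_principal_self _)
  have hT' : T ∩ g ⁻¹' {y} ∈ l := inter_mem hT hfib
  obtain ⟨a, haT, hay⟩ := Filter.nonempty_of_mem hT'
  have hay' : g a = y := hay
  have hsub : T ∩ g ⁻¹' {y} ⊆ {a} := by
    rintro b ⟨hbT, hby⟩
    have hby' : g b = y := hby
    have hFab : (a, b) ∈ F := hTF (Set.mk_mem_prod haT hbT)
    exact (eq_of_pair_aux hF huniq hFab (hay'.trans hby'.symm)).symm
  refine ⟨a, hay, ?_⟩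
  have : l ≤ pure a := le_pure_iff.2 (mem_of_superset hT' hsub)
  exact this.trans (pure_le_nhds a)

end UCMLemmas

section InvLimLemmas

variable {ι : Type*} [Preorder ι] {Xs : ι → Type*} [∀ i, UniformSpace (Xs i)]
  (S : InvSys ι Xs)

lemma invLim_proj_uc (i : ι) : UniformContinuous (fun t : InvLim S => t.1 i) :=
  (Pi.uniformContinuous_proj Xs i).comp uniformContinuous_subtype_val

lemma invLim_basic_mem {i : ι} {V : Set (Xs i × Xs i)} (hV : V ∈ uniformity (Xs i)) :
    {p : InvLim S × InvLim S | (p.1.1 i, p.2.1 i) ∈ V} ∈ uniformity (InvLim S) :=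
  invLim_proj_uc S i hV

lemma invLim_mem_uniformity [IsDirected ι (· ≤ ·)] [Nonempty ι]
    {U : Set (InvLim S × InvLim S)} (hU : U ∈ uniformity (InvLim S)) :
    ∃ i, ∃ V ∈ uniformity (Xs i),
      {p : InvLim S × InvLim S | (p.1.1 i, p.2.1 i) ∈ V} ⊆ U := by
  have h1 : uniformity (InvLim S) = ⨅ i, Filter.comap
      (fun p : InvLim S × InvLim S => (p.1.1 i, p.2.1 i)) (uniformity (Xs i)) := by
    rw [uniformity_subtype, Pi.uniformity, Filter.comap_iInf]
    refine iInf_congr fun i => ?_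
    rw [Filter.comap_comap]
    rfl
  have key : ∀ i j : ι, i ≤ j →
      Filter.comap (fun p : InvLim S × InvLim S => (p.1.1 j, p.2.1 j)) (uniformity (Xs j)) ≤
      Filter.comap (fun p : InvLim S × InvLim S => (p.1.1 i, p.2.1 i)) (uniformity (Xs i)) := by
    intro i j hij
    have heq : (fun p : InvLim S × InvLim S => (p.1.1 i, p.2.1 i)) =
        (fun q : Xs j × Xs j => (S.bond i j hij q.1, S.bond i j hij q.2)) ∘
          (fun p : InvLim S × InvLim S => (p.1.1 j, p.2.1 j)) := by
      funext p
      exact congrArg₂ Prod.mk (p.1.2 i j hij).symm (p.2.2 i j hij).symm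
    rw [heq, ← Filter.comap_comap]
    exact Filter.comap_mono (Filter.tendsto_iff_comap.1 (S.uc i j hij))
  have hdir : Directed (· ≥ ·) (fun i => Filter.comap
      (fun p : InvLim S × InvLim S => (p.1.1 i, p.2.1 i)) (uniformity (Xs i))) := by
    intro i j
    obtain ⟨k, hik, hjk⟩ := exists_ge_ge i j
    exact ⟨k, key i k hik, key j k hjk⟩
  rw [h1, Filter.mem_iInf_of_directed hdir] at hU
  obtain ⟨i, hi⟩ := hU
  obtain ⟨V, hV, hsub⟩ := Filter.mem_comap.1 hi
  exact ⟨i, V, hV, hsub⟩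

end InvLimLemmas

section DirectionA

theorem directionA {X : Type u} {Y : Type v} [UniformSpace X] [UniformSpace Y]
    [T2Space Y] {f : X → Y} (D : UCMInvLimData X Y f) :
    T2Space X ∧ GeneratesUS f ∧ ChainLifting f ∧
      StrongApproxUniqueChainLifts f ∧ CompleteFibers f := by
  letI := D.pre
  haveI := D.dir
  haveI := D.nonempty
  letI := D.uX
  have hT2 : ∀ i, T2Space (D.Xs i) := fun i =>
    haveI := ucm_t0 (D.ucm i).1.1 (D.ucm i).2.2
    inferInstance
  haveI : ∀ i, T2Space (D.Xs i) := hT2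
  have i₀ : D.ι := Classical.arbitrary D.ι
  -- T2 for X
  haveI hT2lim : T2Space (InvLim D.S) := inferInstance
  have hXT2 : T2Space X := D.equiv.toHomeomorph.isEmbedding.t2Space
  -- uniform continuity of f
  have hfuc : UniformContinuous f := by
    rw [show f = fun x => D.fι i₀ ((D.equiv x).1 i₀) from funext fun x => (D.comm i₀ x).symm]
    exact ((D.ucm i₀).1.1).comp ((invLim_proj_uc D.S i₀).comp D.equiv.uniformContinuous)
  -- surjectivity of f
  have hfsurj : Function.Surjective f := by
    intro y
    obtain ⟨j, hij, hrange⟩ := D.sml i₀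
    obtain ⟨w, hw⟩ := (D.ucm j).1.2.1 y
    have hmem : D.S.bond i₀ j hij w ∈ range (fun t : InvLim D.S => t.1 i₀) := by
      rw [← hrange]; exact mem_range_self w
    obtain ⟨t, ht0⟩ := hmem
    have ht : t.1 i₀ = D.S.bond i₀ j hij w := ht0
    refine ⟨D.equiv.symm t, ?_⟩
    have h1 : D.fι i₀ ((D.equiv (D.equiv.symm t)).1 i₀) = f (D.equiv.symm t) := D.comm i₀ (D.equiv.symm t)
    rw [D.equiv.apply_symm_apply] at h1
    rw [← h1, ht, D.compat i₀ j hij w, hw]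
  -- images of entourages
  have hfimg : ∀ E ∈ uniformity X, Prod.map f f '' E ∈ uniformity Y := by
    intro E hE
    have hE1 : {p : InvLim D.S × InvLim D.S | (D.equiv.symm p.1, D.equiv.symm p.2) ∈ E} ∈
        uniformity (InvLim D.S) := D.equiv.symm.uniformContinuous hE
    obtain ⟨i, V, hV, hsub⟩ := invLim_mem_uniformity D.S hE1
    obtain ⟨j, hij, hrange⟩ := D.sml i
    have hVj : {q : D.Xs j × D.Xs j | (D.S.bond i j hij q.1, D.S.bond i j hij q.2) ∈ V} ∈
        uniformity (D.Xs j) := D.S.uc i j hij hV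
    have hfj := (D.ucm j).1.2.2 _ hVj
    refine mem_of_superset hfj ?_
    rintro ⟨y1, y2⟩ ⟨⟨A, B⟩, hab, habeq⟩
    obtain ⟨s, hs0⟩ : D.S.bond i j hij A ∈ range (fun t : InvLim D.S => t.1 i) := by
      rw [← hrange]; exact mem_range_self A
    obtain ⟨t, ht0⟩ : D.S.bond i j hij B ∈ range (fun t : InvLim D.S => t.1 i) := by
      rw [← hrange]; exact mem_range_self B
    have hs : s.1 i = D.S.bond i j hij A := hs0
    have ht : t.1 i = D.S.bond i j hij B := ht0
    have hst : (s, t) ∈ {p : InvLim D.S × InvLim D.S | (D.equiv.symm p.1, D.equiv.symm p.2) ∈ E} :=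
      hsub (by show (s.1 i, t.1 i) ∈ V; rw [hs, ht]; exact hab)
    refine ⟨(D.equiv.symm s, D.equiv.symm t), hst, ?_⟩
    have hA : f (D.equiv.symm s) = D.fι j A := by
      have h1 : D.fι i ((D.equiv (D.equiv.symm s)).1 i) = f (D.equiv.symm s) := D.comm i (D.equiv.symm s)
      rw [D.equiv.apply_symm_apply] at h1
      rw [← h1, hs, D.compat i j hij A]
    have hB : f (D.equiv.symm t) = D.fι j B := by
      have h1 : D.fι i ((D.equiv (D.equiv.symm t)).1 i) = f (D.equiv.symm t) := D.comm i (D.equiv.symm t)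
      rw [D.equiv.apply_symm_apply] at h1
      rw [← h1, ht, D.compat i j hij B]
    have := habeq
    simp only [Prod.map, Prod.mk.injEq] at this ⊢
    exact ⟨hA.trans this.1, hB.trans this.2⟩
  -- chain lifting
  have hfcl : ChainLifting f := by
    intro E hE
    have hE1 : {p : InvLim D.S × InvLim D.S | (D.equiv.symm p.1, D.equiv.symm p.2) ∈ E} ∈
        uniformity (InvLim D.S) := D.equiv.symm.uniformContinuous hE
    obtain ⟨i, V, hV, hsub⟩ := invLim_mem_uniformity D.S hE1
    obtain ⟨j, hij, hrange⟩ := D.sml i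
    have hVj : {q : D.Xs j × D.Xs j | (D.S.bond i j hij q.1, D.S.bond i j hij q.2) ∈ V} ∈
        uniformity (D.Xs j) := D.S.uc i j hij hV
    obtain ⟨Fj, hFj, hlift⟩ := (D.ucm j).2.1 _ hVj
    refine ⟨{p : X × X | ((D.equiv p.1).1 j, (D.equiv p.2).1 j) ∈ Fj},
      ((invLim_proj_uc D.S j).comp D.equiv.uniformContinuous) hFj, ?_⟩
    intro x c hc hch
    have hmono : Prod.map f f '' {p : X × X | ((D.equiv p.1).1 j, (D.equiv p.2).1 j) ∈ Fj} ⊆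
        Prod.map (D.fι j) (D.fι j) '' Fj := by
      rintro ⟨y1, y2⟩ ⟨⟨A, B⟩, hab, heq⟩
      refine ⟨((D.equiv A).1 j, (D.equiv B).1 j), hab, ?_⟩
      simp only [Prod.map, Prod.mk.injEq] at heq ⊢
      exact ⟨(D.comm j A).trans heq.1, (D.comm j B).trans heq.2⟩
    have hc' : IsEChain (Prod.map (D.fι j) (D.fι j) '' Fj) c := hc.mono hmono
    have hhead : c.head? = some (D.fι j ((D.equiv x).1 j)) := by rw [hch, D.comm j x]
    obtain ⟨d, hd, hdh, hdm⟩ := hlift ((D.equiv x).1 j) c hc' hhead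
    have hd'chain : IsEChain V (d.map (D.S.bond i j hij)) := (isEChain_map _).2 hd
    have hd'head : (d.map (D.S.bond i j hij)).head? = some ((D.equiv x).1 i) := by
      rw [List.head?_map, hdh]
      simp [(D.equiv x).2 i j hij]
    have hrangecond : ∀ b ∈ d.map (D.S.bond i j hij),
        ∃ t : InvLim D.S, (fun t : InvLim D.S => t.1 i) t = b := by
      intro b hb
      obtain ⟨A, _, rfl⟩ := List.mem_map.1 hb
      have : D.S.bond i j hij A ∈ range (fun t : InvLim D.S => t.1 i) := by
        rw [← hrange]; exact mem_range_self A
      exact this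
    obtain ⟨ts, hts, htsh⟩ := lift_list_range (fun t : InvLim D.S => t.1 i)
      (d.map (D.S.bond i j hij)) (D.equiv x) hrangecond hd'head
    have htschain : IsEChain {p : InvLim D.S × InvLim D.S | (p.1.1 i, p.2.1 i) ∈ V} ts :=
      (isEChain_map (fun t : InvLim D.S => t.1 i)).1 (hts ▸ hd'chain)
    refine ⟨ts.map D.equiv.symm, ?_, ?_, ?_⟩
    · exact (isEChain_map D.equiv.symm).2 (htschain.mono fun p hp => hsub hp)
    · rw [List.head?_map, htsh]
      simp
    · rw [List.map_map]
      have hfun : (f ∘ D.equiv.symm) = fun t : InvLim D.S => D.fι i (t.1 i) := by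
        funext t
        have h1 : D.fι i ((D.equiv (D.equiv.symm t)).1 i) = f (D.equiv.symm t) := D.comm i (D.equiv.symm t)
        rw [D.equiv.apply_symm_apply] at h1
        exact h1.symm
      rw [hfun, show (fun t : InvLim D.S => D.fι i (t.1 i)) =
        (D.fι i) ∘ (fun t : InvLim D.S => t.1 i) from rfl, ← List.map_map, hts,
        List.map_map, show (D.fι i) ∘ (D.S.bond i j hij) = D.fι j from funext (D.compat i j hij), hdm]
  -- strong approximate uniqueness
  have hfsu : StrongApproxUniqueChainLifts f := by
    intro E hE
    have hE1 : {p : InvLim D.S × InvLim D.S | (D.equiv.symm p.1, D.equiv.symm p.2) ∈ E} ∈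
        uniformity (InvLim D.S) := D.equiv.symm.uniformContinuous hE
    obtain ⟨i, V, hV, hsub⟩ := invLim_mem_uniformity D.S hE1
    obtain ⟨Fi, hFi, _, huniq⟩ := (D.ucm i).2.2 univ univ_mem
    refine ⟨{p : X × X | ((D.equiv p.1).1 i, (D.equiv p.2).1 i) ∈ Fi} ∩ E,
      inter_mem (((invLim_proj_uc D.S i).comp D.equiv.uniformContinuous) hFi) hE,
      inter_subset_right, ?_⟩
    intro c d hc hd hh hm
    set φ : X → D.Xs i := fun x => (D.equiv x).1 i with hφ
    have hc' : IsEChain Fi (c.map φ) := (isEChain_map φ).2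
      ((hc.mono inter_subset_left).mono (fun p hp => hp))
    have hd' : IsEChain Fi (d.map φ) := (isEChain_map φ).2
      ((hd.mono inter_subset_left).mono (fun p hp => hp))
    have hheads : (c.map φ).head? = (d.map φ).head? := by
      rw [List.head?_map, List.head?_map, hh]
    have hmaps : (c.map φ).map (D.fι i) = (d.map φ).map (D.fι i) := by
      rw [List.map_map, List.map_map, show (D.fι i) ∘ φ = f from funext fun x => D.comm i x, hm]
    have heq := huniq _ _ hc' hd' hheads hmaps
    have hfa := map_eq_forall₂ heq
    refine List.Forall₂.imp ?_ hfa
    intro a b hab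
    constructor
    · show (φ a, φ b) ∈ Fi
      rw [hab]; exact refl_mem_uniformity hFi
    · have h1 : (D.equiv a, D.equiv b) ∈ {p : InvLim D.S × InvLim D.S | (p.1.1 i, p.2.1 i) ∈ V} := by
        show ((D.equiv a).1 i, (D.equiv b).1 i) ∈ V
        have : (D.equiv a).1 i = (D.equiv b).1 i := hab
        rw [this]; exact refl_mem_uniformity hV
      have h2 := hsub h1
      simpa using h2
  -- complete fibers
  have hfcf : CompleteFibers f := by
    intro y l hl hle
    set l' := l.map D.equiv with hl'def
    have hl' : Cauchy l' := hl.map D.equiv.uniformContinuous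
    set li := fun i => l'.map (fun t : InvLim D.S => t.1 i) with hlidef
    have hli : ∀ i, Cauchy (li i) := fun i => hl'.map (invLim_proj_uc D.S i)
    have hlif : ∀ i, li i ≤ 𝓟 (D.fι i ⁻¹' {y}) := by
      intro i
      rw [le_principal_iff]
      simp only [hlidef, hl'def, Filter.mem_map]
      refine mem_of_superset (hle (mem_principal_self _)) ?_
      intro x hx
      show D.fι i ((D.equiv x).1 i) = y
      rw [D.comm i x]; exact hx
    have hex : ∀ i, ∃ A, A ∈ D.fι i ⁻¹' {y} ∧ li i ≤ nhds A := by
      intro i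
      exact ucm_completeFibers (D.ucm i).2.2 y (li i) (hli i) (hlif i)
    choose a ha hla using hex
    have hthread : ∀ i j (hij : i ≤ j), D.S.bond i j hij (a j) = a i := by
      intro i j hij
      have h1 : li i = (li j).map (D.S.bond i j hij) := by
        simp only [hlidef, Filter.map_map]
        exact congrArg (fun g => Filter.map g l') (funext fun t => (t.2 i j hij).symm)
      have h2 : (li j).map (D.S.bond i j hij) ≤ nhds (D.S.bond i j hij (a j)) :=
        (Filter.map_mono (hla j)).trans ((D.S.uc i j hij).continuous.tendsto (a j))
      haveI : (li i).NeBot := (hli i).1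
      have e1 : Tendsto id (li i) (nhds (a i)) := by
        rw [tendsto_id']; exact hla i
      have e2 : Tendsto id (li i) (nhds (D.S.bond i j hij (a j))) := by
        rw [tendsto_id']; rw [h1]; exact h2
      exact (tendsto_nhds_unique e1 e2).symm
    refine ⟨D.equiv.symm ⟨a, hthread⟩, ?_, ?_⟩
    · show f (D.equiv.symm ⟨a, hthread⟩) = y
      have h1 : D.fι i₀ ((D.equiv (D.equiv.symm ⟨a, hthread⟩)).1 i₀) = f (D.equiv.symm ⟨a, hthread⟩) :=
        D.comm i₀ (D.equiv.symm ⟨a, hthread⟩)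
      rw [D.equiv.apply_symm_apply] at h1
      rw [← h1]
      exact ha i₀
    · have hl'A : l' ≤ nhds (⟨a, hthread⟩ : InvLim D.S) := by
        have hv : Tendsto (fun t : InvLim D.S => t.1) l' (nhds a) :=
          tendsto_pi_nhds.2 (fun i => hla i)
        rw [nhds_subtype_eq_comap, ← Filter.map_le_iff_le_comap]
        exact hv
      have hback : l = l'.map D.equiv.symm := by
        rw [hl'def, Filter.map_map]
        have : (D.equiv.symm ∘ D.equiv) = id := funext fun x => D.equiv.symm_apply_apply x
        rw [this, Filter.map_id]
      rw [hback]
      exact (Filter.map_mono hl'A).trans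
        ((D.equiv.symm.uniformContinuous.continuous.tendsto _))
  exact ⟨hXT2, ⟨hfuc, hfsurj, hfimg⟩, hfcl, hfsu, hfcf⟩

end DirectionA

section MoreListHelpers

variable {X : Type*} {Y : Type*}

lemma isEChain_pair {F : Set (X × X)} {a b : X} : IsEChain F [a, b] ↔ (a, b) ∈ F :=
  List.isChain_pair

lemma isEChain_triple {F : Set (X × X)} {a b c : X} (h1 : (a, b) ∈ F) (h2 : (b, c) ∈ F) :
    IsEChain F [a, b, c] :=
  List.isChain_cons_cons.2 ⟨h1, List.isChain_pair.2 h2⟩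

lemma eClose_pair_snd {F : Set (X × X)} {a b a' b' : X}
    (h : EClose F [a, b] [a', b']) : (b, b') ∈ F :=
  (List.forall₂_cons.1 (List.forall₂_cons.1 h).2).1

lemma eClose_triple_thd {F : Set (X × X)} {a b c a' b' c' : X}
    (h : EClose F [a, b, c] [a', b', c']) : (c, c') ∈ F :=
  (List.forall₂_cons.1 (List.forall₂_cons.1 (List.forall₂_cons.1 h).2).2).1

lemma forall₂_conj {R S : X → X → Prop} : ∀ {l l' : List X},
    List.Forall₂ R l l' → List.Forall₂ S l l' →
    List.Forall₂ (fun a b => R a b ∧ S a b) l l'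
  | [], [], _, _ => List.Forall₂.nil
  | _ :: _, _ :: _, List.Forall₂.cons h1 t1, List.Forall₂.cons h2 t2 =>
      List.Forall₂.cons ⟨h1, h2⟩ (forall₂_conj t1 t2)

end MoreListHelpers

section DirectionB

variable {X : Type u} {Y : Type v} [UniformSpace X] [UniformSpace Y] (f : X → Y)

/-- Admissible entourages: entourages for which chains with the same head and the
same image are entourage-close. -/
def Adm (F : Set (X × X)) : Prop :=
  F ∈ uniformity X ∧ ∀ c d : List X, IsEChain F c → IsEChain F d → c.head? = d.head? →
    c.map f = d.map f → EClose F c d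

/-- The index set of admissible entourages, ordered by reverse inclusion. -/
def Idx : Type u := {F : Set (X × X) // Adm f F}

instance : Preorder (Idx f) :=
  Preorder.lift fun a : Idx f => OrderDual.toDual a.1

lemma Idx.subset_of_le {a b : Idx f} (h : a ≤ b) : b.1 ⊆ a.1 := h

lemma Idx.le_of_subset {a b : Idx f} (h : b.1 ⊆ a.1) : a ≤ b := h

lemma adm_symm (i : Idx f) {a b : X} (hf : f a = f b) (h : (a, b) ∈ i.1) :
    (b, a) ∈ i.1 := by
  have hcl := i.2.2 [a, b] [a, a] (isEChain_pair.2 h)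
    (isEChain_pair.2 (refl_mem_uniformity i.2.1)) rfl (by simp [hf])
  exact eClose_pair_snd hcl

lemma adm_trans (i : Idx f) {a b c : X} (hf1 : f a = f b) (hf2 : f b = f c)
    (h1 : (a, b) ∈ i.1) (h2 : (b, c) ∈ i.1) : (a, c) ∈ i.1 := by
  have hba : (b, a) ∈ i.1 := adm_symm f i hf1 h1
  have hcl := i.2.2 [b, a] [b, c] (isEChain_pair.2 hba) (isEChain_pair.2 h2) rfl
    (by simp [hf1.trans hf2])
  exact eClose_pair_snd hcl

/-- The setoid on `X` induced by an admissible entourage: same fiber and `F`-close. -/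
def st (i : Idx f) : Setoid X where
  r a b := f a = f b ∧ (a, b) ∈ i.1
  iseqv := by
    refine ⟨fun a => ⟨rfl, refl_mem_uniformity i.2.1⟩, ?_, ?_⟩
    · rintro a b ⟨hf, hab⟩
      exact ⟨hf.symm, adm_symm f i hf hab⟩
    · rintro a b c ⟨hf1, h1⟩ ⟨hf2, h2⟩
      exact ⟨hf1.trans hf2, adm_trans f i hf1 hf2 h1 h2⟩

/-- The quotient space. -/
def Zq (i : Idx f) : Type u := Quotient (st f i)

def hq (i : Idx f) : X → Zq f i := fun x => Quotient.mk (st f i) x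

def gq (i : Idx f) : Zq f i → Y := Quotient.lift f (fun _ _ h => h.1)

lemma hq_surj (i : Idx f) : Function.Surjective (hq f i) := fun z =>
  Quotient.inductionOn z fun a => ⟨a, rfl⟩

lemma hq_exact {i : Idx f} {a b : X} (h : hq f i a = hq f i b) :
    f a = f b ∧ (a, b) ∈ i.1 := Quotient.exact h

lemma hq_sound {i : Idx f} {a b : X} (h1 : f a = f b) (h2 : (a, b) ∈ i.1) :
    hq f i a = hq f i b := Quotient.sound ⟨h1, h2⟩

/-- The bonding maps. -/
def bondq (i j : Idx f) (h : i ≤ j) : Zq f j → Zq f i :=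
  Quotient.lift (fun x => hq f i x) (fun _ _ hab => hq_sound f hab.1 (Idx.subset_of_le f h hab.2))

lemma bondq_hq (i j : Idx f) (h : i ≤ j) (x : X) :
    bondq f i j h (hq f j x) = hq f i x := rfl

/-- The `step_lift` transport lemma. -/
lemma step_lift (i : Idx f) {A B : Set (X × X)} (hAi : A ⊆ i.1) (hBi : B ⊆ i.1)
    (hlift : ∀ x : X, ∀ c : List Y, IsEChain (Prod.map f f '' B) c →
      c.head? = some (f x) → ∃ d, IsEChain A d ∧ d.head? = some x ∧ d.map f = c)
    {x a b : X} (hxa : (st f i).r x a) (hab : (a, b) ∈ B) :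
    ∃ b', (x, b') ∈ A ∧ (st f i).r b' b := by
  have hchain : IsEChain (Prod.map f f '' B) [f x, f b] :=
    isEChain_pair.2 ⟨(a, b), hab, by simp only [Prod.map]; rw [hxa.1]⟩
  obtain ⟨d, hd, hdh, hdm⟩ := hlift x [f x, f b] hchain rfl
  obtain ⟨x1, b', rfl, hfx1, hfb'⟩ := exists_pair_of_map_eq hdm
  have hx : x = x1 := by
    have : x1 = x := by simpa using hdh
    exact this.symm
  subst hx
  have hxb' : (x, b') ∈ A := isEChain_pair.1 hd
  have hc1 : IsEChain i.1 [x, x, b'] :=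
    isEChain_triple (refl_mem_uniformity i.2.1) (hAi hxb')
  have hc2 : IsEChain i.1 [x, a, b] := isEChain_triple hxa.2 (hBi hab)
  have hcl3 := i.2.2 [x, x, b'] [x, a, b] hc1 hc2 rfl (by simp [hxa.1, hfb'])
  exact ⟨b', hxb', ⟨hfb', eClose_triple_thd hcl3⟩⟩

end DirectionB

section DirectionB2

variable {X : Type u} {Y : Type v} [UniformSpace X] [UniformSpace Y] (f : X → Y)

/-- The uniform structure on the quotient `Zq f i`, with basic entourages the images
of entourages of `X`. -/
def usZ (hcl : ChainLifting f) (i : Idx f) : UniformSpace (Zq f i) :=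
  UniformSpace.ofCore <| UniformSpace.Core.mk'
    ((uniformity X).map (Prod.map (hq f i) (hq f i)))
    (by
      intro r hr z
      obtain ⟨x, rfl⟩ := hq_surj f i z
      have hpre : Prod.map (hq f i) (hq f i) ⁻¹' r ∈ uniformity X := hr
      have hxx : (x, x) ∈ Prod.map (hq f i) (hq f i) ⁻¹' r := refl_mem_uniformity hpre
      exact hxx)
    (by
      intro r hr
      have hpre : Prod.map (hq f i) (hq f i) ⁻¹' r ∈ uniformity X := hr
      have h1 : Prod.swap ⁻¹' (Prod.map (hq f i) (hq f i) ⁻¹' r) ∈ uniformity X :=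
        tendsto_swap_uniformity hpre
      exact h1)
    (by
      intro r hr
      have hD : Prod.map (hq f i) (hq f i) ⁻¹' r ∈ uniformity X := hr
      obtain ⟨D₂, hD₂, hD₂D⟩ := comp_mem_uniformity_sets hD
      have hA : D₂ ∩ i.1 ∈ uniformity X := inter_mem hD₂ i.2.1
      obtain ⟨B₀, hB₀, hliftB₀⟩ := hcl (D₂ ∩ i.1) hA
      have hB : B₀ ∩ (D₂ ∩ i.1) ∈ uniformity X := inter_mem hB₀ hA
      refine ⟨Prod.map (hq f i) (hq f i) '' (B₀ ∩ (D₂ ∩ i.1)),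
        Filter.image_mem_map hB, ?_⟩
      rintro ⟨α, γ⟩ ⟨β, ⟨⟨x, y₁⟩, hxy1, heq1⟩, ⟨⟨y₂, z⟩, hy2z, heq2⟩⟩
      simp only [Prod.map, Prod.mk.injEq] at heq1 heq2
      have hr12 : (st f i).r y₁ y₂ := hq_exact f (heq1.2.trans heq2.1.symm)
      have hlift' : ∀ x' : X, ∀ c : List Y,
          IsEChain (Prod.map f f '' (B₀ ∩ (D₂ ∩ i.1))) c → c.head? = some (f x') →
          ∃ d, IsEChain (D₂ ∩ i.1) d ∧ d.head? = some x' ∧ d.map f = c :=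
        fun x' c hc hch => hliftB₀ x' c (hc.mono (image_mono inter_subset_left)) hch
      obtain ⟨z', hz'A, hz'z⟩ := step_lift f i (inter_subset_right)
        (fun p hp => (hp.2.2 : p ∈ i.1)) hlift' hr12 hy2z
      have hxz' : (x, z') ∈ Prod.map (hq f i) (hq f i) ⁻¹' r := hD₂D
        ⟨y₁, hxy1.2.1, hz'A.1⟩
      have : (hq f i x, hq f i z') ∈ r := hxz'
      rw [heq1.1] at this
      rwa [hq_sound f hz'z.1 hz'z.2, heq2.2] at this)

lemma uZq (hcl : ChainLifting f) (i : Idx f) :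
    @uniformity (Zq f i) (usZ f hcl i) =
      (uniformity X).map (Prod.map (hq f i) (hq f i)) := rfl

lemma hq_uc (hcl : ChainLifting f) (i : Idx f) :
    @UniformContinuous X (Zq f i) _ (usZ f hcl i) (hq f i) := by
  show Filter.Tendsto _ (uniformity X) ((uniformity X).map (Prod.map (hq f i) (hq f i)))
  exact Filter.tendsto_map

lemma bondq_uc (hcl : ChainLifting f) (i j : Idx f) (h : i ≤ j) :
    @UniformContinuous (Zq f j) (Zq f i) (usZ f hcl j) (usZ f hcl i) (bondq f i j h) := by
  show Filter.Tendsto _ ((uniformity X).map (Prod.map (hq f j) (hq f j)))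
    ((uniformity X).map (Prod.map (hq f i) (hq f i)))
  rw [Filter.tendsto_map'_iff]
  exact Filter.tendsto_map

/-- Chains in the quotient lift to chains in `X`. -/
lemma lift_chain_q (i : Idx f) {M B : Set (X × X)} (hMi : M ⊆ i.1) (hBi : B ⊆ i.1)
    (hliftB : ∀ x : X, ∀ c : List Y, IsEChain (Prod.map f f '' B) c →
      c.head? = some (f x) → ∃ d, IsEChain M d ∧ d.head? = some x ∧ d.map f = c) :
    ∀ (C : List (Zq f i)) (x : X), IsEChain (Prod.map (hq f i) (hq f i) '' B) C →
      C.head? = some (hq f i x) →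
      ∃ xs : List X, IsEChain M xs ∧ xs.head? = some x ∧ xs.map (hq f i) = C
  | [], x, _, hch => by simp at hch
  | [z], x, _, hch => by
      refine ⟨[x], List.isChain_singleton x, rfl, ?_⟩
      simp only [List.head?_cons, Option.some.injEq] at hch
      simp [hch]
  | z1 :: z2 :: rest, x, hc, hch => by
      simp only [List.head?_cons, Option.some.injEq] at hch
      obtain ⟨hpair, hcrest⟩ := List.isChain_cons_cons.1 hc
      obtain ⟨⟨a, b⟩, hab, heq⟩ := hpair
      simp only [Prod.map, Prod.mk.injEq] at heq
      have hxa : (st f i).r x a := hq_exact f (by rw [← hch, ← heq.1])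
      obtain ⟨b', hxb', hb'b⟩ := step_lift f i hMi hBi hliftB hxa hab
      have hqb' : hq f i b' = z2 := (hq_sound f hb'b.1 hb'b.2).trans heq.2
      obtain ⟨xs', hxs'c, hxs'h, hxs'm⟩ :=
        lift_chain_q i hMi hBi hliftB (z2 :: rest) b' hcrest (by rw [hqb']; rfl)
      refine ⟨x :: xs', ?_, rfl, ?_⟩
      · refine List.isChain_cons.2 ⟨?_, hxs'c⟩
        intro y hy
        rw [hxs'h] at hy
        simp only [Option.mem_def, Option.some.injEq] at hy
        rw [← hy]
        exact hxb'
      · simp only [List.map_cons]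
        rw [hxs'm, hch]

end DirectionB2

section DirectionB3

variable {X : Type u} {Y : Type v} [UniformSpace X] [UniformSpace Y] (f : X → Y)

lemma gq_hq_image (i : Idx f) (D : Set (X × X)) :
    Prod.map (gq f i) (gq f i) '' (Prod.map (hq f i) (hq f i) '' D) = Prod.map f f '' D := by
  rw [← Set.image_comp, Prod.map_comp_map]
  rfl

end DirectionB3

theorem directionB {X : Type (max u v)} {Y : Type v} [UniformSpace X] [UniformSpace Y]
    [T2Space X] (f : X → Y) (hg : GeneratesUS f) (hcl : ChainLifting f)
    (hs : StrongApproxUniqueChainLifts f) (hcf : CompleteFibers f) :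
    Nonempty (UCMInvLimData X Y f) := by
  classical
  have hadm : ∀ E ∈ uniformity X, ∃ F, Adm f F ∧ F ⊆ E := by
    intro E hE
    obtain ⟨F, hF, hFE, hFcl⟩ := hs E hE
    exact ⟨F, ⟨hF, hFcl⟩, hFE⟩
  haveI hdir : IsDirected (Idx f) (· ≤ ·) := ⟨fun a b => by
    obtain ⟨F, hFadm, hFE⟩ := hadm (a.1 ∩ b.1) (inter_mem a.2.1 b.2.1)
    exact ⟨⟨F, hFadm⟩, Idx.le_of_subset f (fun p hp => (hFE hp).1),
      Idx.le_of_subset f (fun p hp => (hFE hp).2)⟩⟩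
  haveI hne : Nonempty (Idx f) := by
    obtain ⟨F, hFadm, _⟩ := hadm univ univ_mem
    exact ⟨⟨F, hFadm⟩⟩
  letI : ∀ i : Idx f, UniformSpace (Zq f i) := usZ f hcl
  set S : InvSys (Idx f) (Zq f) :=
    { bond := fun i j h => bondq f i j h
      uc := fun i j h => bondq_uc f hcl i j h
      bond_self := fun i x => Quotient.inductionOn x fun _ => rfl
      bond_comp := fun i j k hij hjk x => Quotient.inductionOn x fun _ => rfl }
    with hSdef
  -- each gq is a uniform covering map
  have hucm : ∀ i : Idx f, IsUCM (gq f i) := by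
    intro i
    have hguc : UniformContinuous (gq f i) := by
      show Filter.Tendsto _ ((uniformity X).map (Prod.map (hq f i) (hq f i))) (uniformity Y)
      rw [Filter.tendsto_map'_iff]
      exact hg.1
    have hgsurj : Function.Surjective (gq f i) := by
      intro y
      obtain ⟨x, hx⟩ := hg.2.1 y
      exact ⟨hq f i x, hx⟩
    have hgimg : ∀ V ∈ uniformity (Zq f i),
        Prod.map (gq f i) (gq f i) '' V ∈ uniformity Y := by
      intro V hV
      have hD : Prod.map (hq f i) (hq f i) ⁻¹' V ∈ uniformity X := hV
      refine mem_of_superset (hg.2.2 _ hD) ?_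
      rw [← gq_hq_image]
      exact image_mono (image_preimage_subset _ _)
    have hgcl : ChainLifting (gq f i) := by
      intro V hV
      have hD : Prod.map (hq f i) (hq f i) ⁻¹' V ∈ uniformity X := hV
      obtain ⟨B, hB, hlift⟩ := hcl _ hD
      refine ⟨Prod.map (hq f i) (hq f i) '' B, Filter.image_mem_map hB, ?_⟩
      intro z c hc hch
      obtain ⟨x, rfl⟩ := hq_surj f i z
      rw [gq_hq_image] at hc
      obtain ⟨d, hd, hdh, hdm⟩ := hlift x c hc hch
      refine ⟨d.map (hq f i), ?_, ?_, ?_⟩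
      · exact (isEChain_map (hq f i)).2 hd
      · rw [List.head?_map, hdh]; rfl
      · rw [List.map_map]; exact hdm
    have hguniq : UniqueChainLifts (gq f i) := by
      intro V hV
      have hD : Prod.map (hq f i) (hq f i) ⁻¹' V ∈ uniformity X := hV
      obtain ⟨M, hM, hMsub, hMcl⟩ := hs _ (inter_mem hD i.2.1)
      obtain ⟨B₀, hB₀, hliftM⟩ := hcl M hM
      have hBmem : B₀ ∩ M ∈ uniformity X := inter_mem hB₀ hM
      have hliftB : ∀ x : X, ∀ c : List Y, IsEChain (Prod.map f f '' (B₀ ∩ M)) c →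
          c.head? = some (f x) → ∃ d, IsEChain M d ∧ d.head? = some x ∧ d.map f = c :=
        fun x c hc hch => hliftM x c (hc.mono (image_mono inter_subset_left)) hch
      have hMi : M ⊆ i.1 := fun p hp => (hMsub hp).2
      have hBi : B₀ ∩ M ⊆ i.1 := fun p hp => hMi hp.2
      refine ⟨Prod.map (hq f i) (hq f i) '' (B₀ ∩ M), Filter.image_mem_map hBmem, ?_, ?_⟩
      · refine subset_trans (image_mono ?_) (image_preimage_subset _ _)
        exact fun p hp => (hMsub hp.2).1
      intro C C' hC hC' hh hm
      cases C with
      | nil =>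
          have : C'.head? = none := hh.symm ▸ rfl
          rw [List.head?_eq_none_iff.1 this]
      | cons z rest =>
          obtain ⟨x₀, hx₀⟩ := hq_surj f i z
          have hChead : (z :: rest).head? = some (hq f i x₀) := by rw [hx₀]; rfl
          have hC'head : C'.head? = some (hq f i x₀) := by rw [← hh, hx₀]; rfl
          obtain ⟨xs, hxsc, hxsh, hxsm⟩ :=
            lift_chain_q f i hMi hBi hliftB (z :: rest) x₀ hC hChead
          obtain ⟨ys, hysc, hysh, hysm⟩ :=
            lift_chain_q f i hMi hBi hliftB C' x₀ hC' hC'head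
          have hfm : xs.map f = ys.map f := by
            have e1 : xs.map f = ((z :: rest).map (gq f i)) := by
              rw [← hxsm, List.map_map]; rfl
            have e2 : ys.map f = (C'.map (gq f i)) := by
              rw [← hysm, List.map_map]; rfl
            rw [e1, e2, hm]
          have hclose := hMcl xs ys hxsc hysc (hxsh.trans hysh.symm) hfm
          have hfa := map_eq_forall₂ hfm
          have hcomb := forall₂_conj hclose hfa
          have : List.Forall₂ (fun a b => hq f i a = hq f i b) xs ys :=
            hcomb.imp (fun a b hab => hq_sound f hab.2 (hMi hab.1))
          rw [← hxsm, ← hysm]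
          exact forall₂_map_eq this
    exact ⟨⟨hguc, hgsurj, hgimg⟩, hgcl, hguniq⟩
  -- the comparison map
  let toLim : X → InvLim S := fun x => ⟨fun i => hq f i x, fun i j h => rfl⟩
  have hinj : Function.Injective toLim := by
    intro a b hab
    refine t0Space_iff_uniformity.1 (inferInstance : T0Space X) a b ?_
    intro r hr
    obtain ⟨F, hFadm, hFr⟩ := hadm r hr
    exact hFr (hq_exact f (congrFun (congrArg Subtype.val hab) ⟨F, hFadm⟩)).2
  have hsurj : Function.Surjective toLim := by
    intro t
    choose φ hφ using fun i : Idx f => hq_surj f i (t.1 i)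
    have hclm : ∀ (i j : Idx f), i ≤ j → (st f i).r (φ j) (φ i) := by
      intro i j h
      have h1 : S.bond i j h (t.1 j) = t.1 i := t.2 i j h
      rw [← hφ j, ← hφ i] at h1
      exact hq_exact f h1
    have hsame : ∀ i j : Idx f, f (φ i) = f (φ j) := by
      intro i j
      obtain ⟨k, hik, hjk⟩ := exists_ge_ge i j
      have r1 := hclm i k hik
      have r2 := hclm j k hjk
      rw [← r1.1, ← r2.1]
    set i₀ : Idx f := Classical.arbitrary (Idx f) with hi₀
    set y : Y := f (φ i₀) with hy₀
    have hy : ∀ i, f (φ i) = y := fun i => hsame i i₀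
    set l : Filter X := Filter.map φ Filter.atTop with hldef
    haveI : Filter.atTop.NeBot := Filter.atTop_neBot (α := Idx f)
    have hcauchy : Cauchy l := by
      rw [cauchy_iff]
      refine ⟨Filter.map_neBot, ?_⟩
      intro V hV
      obtain ⟨F, hFadm, hFV⟩ := hadm V hV
      refine ⟨φ '' Set.Ici (⟨F, hFadm⟩ : Idx f),
        Filter.image_mem_map (Filter.Ici_mem_atTop _), ?_⟩
      rintro ⟨p, q⟩ ⟨hp, hq2⟩
      obtain ⟨i1, hi1, rfl⟩ := hp
      obtain ⟨i2, hi2, rfl⟩ := hq2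
      have r1 := hclm ⟨F, hFadm⟩ i1 hi1
      have r2 := hclm ⟨F, hFadm⟩ i2 hi2
      have hr12 : (st f ⟨F, hFadm⟩).r (φ i1) (φ i2) :=
        (st f ⟨F, hFadm⟩).iseqv.trans r1 ((st f ⟨F, hFadm⟩).iseqv.symm r2)
      exact hFV hr12.2
    have hfy : l ≤ 𝓟 (f ⁻¹' {y}) := by
      rw [Filter.le_principal_iff, Filter.mem_map]
      exact Filter.univ_mem' (fun i => hy i)
    obtain ⟨x, hx, hlx⟩ := hcf y l hcauchy hfy
    have hfx : f x = y := hx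
    have hfinal : ∀ i : Idx f, hq f i x = t.1 i := by
      intro i
      set G : Set (X × X) := i.1 ∩ Prod.swap ⁻¹' i.1 with hGdef
      have hGmem : G ∈ uniformity X := inter_mem i.2.1 (tendsto_swap_uniformity i.2.1)
      have hball : UniformSpace.ball x G ∈ nhds x := UniformSpace.ball_mem_nhds x hGmem
      have hev : φ ⁻¹' (UniformSpace.ball x G) ∈ Filter.atTop := Filter.mem_map.1 (hlx hball)
      obtain ⟨i1, hi1⟩ := Filter.mem_atTop_sets.1 hev
      obtain ⟨k, hik, hi1k⟩ := exists_ge_ge i i1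
      have hk1 : (x, φ k) ∈ G := hi1 k hi1k
      have hchain1 : IsEChain i.1 [φ k, x] := isEChain_pair.2 hk1.2
      have hrk := hclm i k hik
      have hchain2 : IsEChain i.1 [φ k, φ i] := isEChain_pair.2 hrk.2
      have hmaps : [φ k, x].map f = [φ k, φ i].map f := by
        simp only [List.map_cons, List.map_nil]
        rw [hfx, hy i]
      have hcl3 := i.2.2 _ _ hchain1 hchain2 rfl hmaps
      have hxi : (x, φ i) ∈ i.1 := eClose_pair_snd hcl3
      have hr : (st f i).r x (φ i) := ⟨hfx.trans (hy i).symm, hxi⟩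
      rw [hq_sound f hr.1 hr.2, hφ i]
    exact ⟨x, Subtype.ext (funext hfinal)⟩
  set eqv : X ≃ InvLim S := Equiv.ofBijective toLim ⟨hinj, hsurj⟩ with heqv
  have huc : UniformContinuous toLim := by
    refine UniformContinuous.subtype_mk ?_ _
    exact uniformContinuous_pi.2 fun i => hq_uc f hcl i
  have hsymm_uc : UniformContinuous (eqv.symm : InvLim S → X) := by
    rw [uniformContinuous_def]
    intro E hE
    obtain ⟨G1, hG1, hG1E⟩ := comp_mem_uniformity_sets hE
    obtain ⟨G, hG, hGG1⟩ := comp_mem_uniformity_sets hG1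
    obtain ⟨F, hFadm, hFG⟩ := hadm G hG
    set i : Idx f := ⟨F, hFadm⟩ with hidef
    have hbasic := invLim_basic_mem S
      (V := Prod.map (hq f i) (hq f i) '' F) (Filter.image_mem_map i.2.1)
    refine mem_of_superset hbasic ?_
    rintro ⟨s, t⟩ hst
    obtain ⟨⟨a, b⟩, hab, heq⟩ := hst
    simp only [Prod.map, Prod.mk.injEq] at heq
    have hps : toLim (eqv.symm s) = s := eqv.apply_symm_apply s
    have hpt : toLim (eqv.symm t) = t := eqv.apply_symm_apply t
    have h1 : hq f i (eqv.symm s) = hq f i a := by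
      rw [show hq f i (eqv.symm s) = s.1 i from congrFun (congrArg Subtype.val hps) i, heq.1]
    have h2 : hq f i b = hq f i (eqv.symm t) := by
      rw [show hq f i (eqv.symm t) = t.1 i from congrFun (congrArg Subtype.val hpt) i, heq.2]
    have hpa : (eqv.symm s, a) ∈ G := hFG (hq_exact f h1).2
    have hbq : (b, eqv.symm t) ∈ G := hFG (hq_exact f h2).2
    have hpb : (eqv.symm s, b) ∈ G1 := hGG1 ⟨a, hpa, hFG hab⟩
    have hfinal : (eqv.symm s, eqv.symm t) ∈ SetRel.comp G1 G1 :=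
      ⟨b, hpb, hGG1 ⟨eqv.symm t, hbq, refl_mem_uniformity hG⟩⟩
    exact hG1E hfinal
  have hsml : StrongML S := by
    intro i
    refine ⟨i, le_rfl, ?_⟩
    rw [Set.range_eq_univ.2 (fun z => ⟨z, S.bond_self i z⟩)]
    refine (Set.range_eq_univ.2 (fun z => ?_)).symm
    obtain ⟨x, rfl⟩ := hq_surj f i z
    exact ⟨toLim x, rfl⟩
  exact ⟨{ ι := Idx f
           Xs := Zq f
           S := S
           sml := hsml
           fι := fun i => gq f i
           compat := fun i j h x => Quotient.inductionOn x fun _ => rfl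
           ucm := hucm
           equiv := UniformEquiv.mk eqv huc hsymm_uc
           comm := fun i x => rfl }⟩

section Transfer

variable {X' : Type*} {X : Type*} {Y : Type*} [UniformSpace X'] [UniformSpace X]
  [UniformSpace Y]

lemma equiv_image_mem (e : X' ≃ᵤ X) {E' : Set (X' × X')} (hE' : E' ∈ uniformity X') :
    {p : X × X | (e.symm p.1, e.symm p.2) ∈ E'} ∈ uniformity X :=
  e.symm.uniformContinuous hE'

lemma GeneratesUS.precomp {f : X → Y} (hg : GeneratesUS f) (e : X' ≃ᵤ X) :
    GeneratesUS (fun x' => f (e x')) := by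
  refine ⟨hg.1.comp e.uniformContinuous, ?_, ?_⟩
  · intro y
    obtain ⟨x, hx⟩ := hg.2.1 y
    exact ⟨e.symm x, by show f (e (e.symm x)) = y; rw [e.apply_symm_apply]; exact hx⟩
  · intro E' hE'
    have him : Prod.map (⇑e) (⇑e) '' E' ∈ uniformity X := by
      refine mem_of_superset (equiv_image_mem e hE') ?_
      rintro ⟨a, b⟩ hab
      exact ⟨(e.symm a, e.symm b), hab, by simp [Prod.map]⟩
    refine mem_of_superset (hg.2.2 _ him) ?_
    rintro ⟨y1, y2⟩ ⟨⟨a, b⟩, ⟨⟨a', b'⟩, hab', heq'⟩, heq⟩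
    refine ⟨(a', b'), hab', ?_⟩
    simp only [Prod.map, Prod.mk.injEq] at heq' heq ⊢
    rw [← heq.1, ← heq.2, ← heq'.1, ← heq'.2]
    exact ⟨rfl, rfl⟩

lemma ChainLifting.precomp {f : X → Y} (hcl : ChainLifting f) (e : X' ≃ᵤ X) :
    ChainLifting (fun x' => f (e x')) := by
  intro E' hE'
  obtain ⟨F, hF, hlift⟩ := hcl _ (equiv_image_mem e hE')
  refine ⟨{p : X' × X' | (e p.1, e p.2) ∈ F}, e.uniformContinuous hF, ?_⟩
  intro x' c hc hch
  have hmono : Prod.map (fun x' => f (e x')) (fun x' => f (e x')) ''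
      {p : X' × X' | (e p.1, e p.2) ∈ F} ⊆ Prod.map f f '' F := by
    rintro ⟨y1, y2⟩ ⟨⟨a, b⟩, hab, heq⟩
    exact ⟨(e a, e b), hab, heq⟩
  obtain ⟨d, hd, hdh, hdm⟩ := hlift (e x') c (hc.mono hmono) hch
  refine ⟨d.map e.symm, ?_, ?_, ?_⟩
  · exact (isEChain_map e.symm).2 hd
  · rw [List.head?_map, hdh]
    simp
  · rw [List.map_map]
    rw [show ((fun x' => f (e x')) ∘ ⇑e.symm) = f from funext fun x => by simp]
    exact hdm

lemma StrongApproxUniqueChainLifts.precomp {f : X → Y}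
    (hs : StrongApproxUniqueChainLifts f) (e : X' ≃ᵤ X) :
    StrongApproxUniqueChainLifts (fun x' => f (e x')) := by
  intro E' hE'
  obtain ⟨F, hF, hFE, hclose⟩ := hs _ (equiv_image_mem e hE')
  refine ⟨{p : X' × X' | (e p.1, e p.2) ∈ F} ∩ E',
    inter_mem (e.uniformContinuous hF) hE', inter_subset_right, ?_⟩
  intro c d hc hd hh hm
  have hc' : IsEChain F (c.map e) := (isEChain_map e).2
    ((hc.mono inter_subset_left).mono fun p hp => hp)
  have hd' : IsEChain F (d.map e) := (isEChain_map e).2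
    ((hd.mono inter_subset_left).mono fun p hp => hp)
  have hh' : (c.map e).head? = (d.map e).head? := by
    rw [List.head?_map, List.head?_map, hh]
  have hm' : (c.map e).map f = (d.map e).map f := by
    rw [List.map_map, List.map_map]
    exact hm
  have hcl2 := hclose _ _ hc' hd' hh' hm'
  rw [EClose, List.forall₂_map_left_iff, List.forall₂_map_right_iff] at hcl2
  refine List.Forall₂.imp ?_ hcl2
  intro a b hab
  refine ⟨hab, ?_⟩
  have := hFE hab
  simpa using this

lemma CompleteFibers.precomp {f : X → Y} (hcf : CompleteFibers f) (e : X' ≃ᵤ X) :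
    CompleteFibers (fun x' => f (e x')) := by
  intro y l hl hle
  have hle2 : l.map e ≤ 𝓟 (f ⁻¹' {y}) := by
    rw [Filter.le_principal_iff, Filter.mem_map]
    exact hle (mem_principal_self _)
  obtain ⟨x, hx, hlx⟩ := hcf y (l.map e) (hl.map e.uniformContinuous) hle2
  refine ⟨e.symm x, ?_, ?_⟩
  · show f (e (e.symm x)) = y
    rw [e.apply_symm_apply]
    exact hx
  · have hback : l = (l.map ⇑e).map ⇑e.symm := by
      rw [Filter.map_map]
      rw [show (⇑e.symm ∘ ⇑e) = id from funext fun z => e.symm_apply_apply z, Filter.map_id]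
    rw [hback]
    exact (Filter.map_mono hlx).trans (e.symm.uniformContinuous.continuous.tendsto x)

end Transfer

/-- Transport of the inverse-limit data along a uniform equivalence. -/
noncomputable def UCMInvLimData.precomp {X' : Type (max u v)} {X : Type u} {Y : Type v}
    [UniformSpace X'] [UniformSpace X] [UniformSpace Y] {f : X → Y} (e : X' ≃ᵤ X)
    (D : UCMInvLimData X' Y (fun x' => f (e x'))) : UCMInvLimData X Y f :=
  letI := D.pre
  letI := D.uX
  haveI := D.dir
  haveI := D.nonempty
  { ι := D.ι, Xs := D.Xs, S := D.S, sml := D.sml, fι := D.fι, compat := D.compat,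
    ucm := D.ucm, equiv := e.symm.trans D.equiv,
    comm := fun i x => by
      have h := D.comm i (e.symm x)
      rw [e.apply_symm_apply] at h
      simpa using h }

/-- For a map `f : X → Y` between uniform spaces with `Y` Hausdorff, `f` is
(up to uniform equivalence) the inverse limit of a strong Mittag-Leffler
inverse system of uniform covering maps over `Y` if and only if `X` is
Hausdorff and `f` generates the uniform structure on `Y`, has chain lifting,
has strong approximate uniqueness of chain lifts, and has complete fibers. -/
theorem ucmInvLim_iff
    {X : Type u} {Y : Type v} [UniformSpace X] [UniformSpace Y] [T2Space Y]
    (f : X → Y) :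
    Nonempty (UCMInvLimData X Y f) ↔
      (T2Space X ∧ GeneratesUS f ∧ ChainLifting f ∧
        StrongApproxUniqueChainLifts f ∧ CompleteFibers f) := by
  constructor
  · rintro ⟨D⟩
    exact directionA D
  · rintro ⟨hT2, hg, hcl, hs, hcf⟩
    haveI := hT2
    let e : ULift.{v} X ≃ᵤ X := UniformEquiv.ulift X
    haveI : T2Space (ULift.{v} X) := e.toHomeomorph.isEmbedding.t2Space
    obtain ⟨D⟩ := directionB (fun x' => f (e x')) (hg.precomp e) (hcl.precomp e)
      (hs.precomp e) (hcf.precomp e)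
    exact ⟨D.precomp e⟩
end
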